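/- There exists an energy function E on two binary variables and a labeling x such that the minimum of E over the union of all αβ-swap move sets at x is strictly smaller than the minimum of E over the union of all ICM move sets at x. (E.g., x = (1,1) with unique minimizer (2,2) and all other configurations having higher energy.) -/

import Mathlib

open Set

def icmMove {V : Type*} {N : ℕ} (x : V → Fin N) (j : V) : Set (V → Fin N) :=
  {y | ∀ i, i ≠ j → y i = x i}

def swapMove {V : Type*} {N : ℕ} (x : V → Fin N) (α β : Fin N) : Set (V → Fin N) :=
  {y | ∀ i, ((x i = α ∨ x i = β) → (y i = α ∨ y i = β)) ∧
            (¬(x i = α ∨ x i = β) → y i = x i)}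

def expMove {V : Type*} {N : ℕ} (x : V → Fin N) (α : Fin N) : Set (V → Fin N) :=
  {y | ∀ i, y i = α ∨ y i = x i}

def genMove {V : Type*} {N : ℕ} (x : V → Fin N) (α β : Fin N) : Set (V → Fin N) :=
  {y | ∀ i, (x i = α → (y i = α ∨ y i = β)) ∧ (x i ≠ α → (y i = α ∨ y i = x i))}

theorem stmt4 :
    ∃ (E : (Fin 2 → Fin 2) → ℝ) (x : Fin 2 → Fin 2),
      sInf (E '' ⋃ (α : Fin 2) (β : Fin 2), swapMove x α β) <
        sInf (E '' ⋃ (j : Fin 2), icmMove x j) := by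
  refine ⟨fun y => if y = ![1,1] then (0:ℝ) else 1, ![0,0], ?_⟩
  have hicm : ((fun y => if y = ![1,1] then (0:ℝ) else 1) ''
      ⋃ (j : Fin 2), icmMove (![0,0] : Fin 2 → Fin 2) j) = {1} := by
    ext r
    constructor
    · rintro ⟨y, hy, rfl⟩
      simp only [mem_iUnion] at hy
      obtain ⟨j, hj⟩ := hy
      have hne : y ≠ ![1,1] := by
        intro h
        subst h
        fin_cases j
        · have := hj 1 (by decide)
          simp at this
        · have := hj 0 (by decide)
          simp at this
      simp [hne]
    · rintro rfl
      exact ⟨![0,0], by simp [mem_iUnion]; exact Or.inl (fun i _ => rfl), by norm_num [show ¬(![0,0] : Fin 2 → Fin 2) = ![1,1] by decide]⟩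
  have hmem : ![1,1] ∈ ⋃ (α : Fin 2) (β : Fin 2), swapMove (![0,0] : Fin 2 → Fin 2) α β := by
    simp only [mem_iUnion]
    refine ⟨0, 1, fun i => ⟨fun _ => ?_, fun h => absurd (Or.inl (by fin_cases i <;> rfl)) h⟩⟩
    fin_cases i <;> simp
  have h0 : (0:ℝ) ∈ (fun y => if y = ![1,1] then (0:ℝ) else 1) ''
      ⋃ (α : Fin 2) (β : Fin 2), swapMove (![0,0] : Fin 2 → Fin 2) α β :=
    ⟨![1,1], hmem, by simp⟩
  have hbdd : BddBelow ((fun y => if y = ![1,1] then (0:ℝ) else 1) ''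
      ⋃ (α : Fin 2) (β : Fin 2), swapMove (![0,0] : Fin 2 → Fin 2) α β) := by
    refine ⟨0, ?_⟩
    rintro r ⟨y, _, rfl⟩
    simp only []; split <;> norm_num
  calc sInf ((fun y => if y = ![1,1] then (0:ℝ) else 1) ''
      ⋃ (α : Fin 2) (β : Fin 2), swapMove (![0,0] : Fin 2 → Fin 2) α β) ≤ 0 := csInf_le hbdd h0
    _ < 1 := by norm_num
    _ = sInf ((fun y => if y = ![1,1] then (0:ℝ) else 1) ''
      ⋃ (j : Fin 2), icmMove (![0,0] : Fin 2 → Fin 2) j) := by rw [hicm, csInf_singleton]
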